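/- arXiv:1605.09393 — 4 statements merged into one kernel-verified Lean document; each statement's English description precedes it below -/
import Mathlib

section
/- Let $R$ be a commutative ring, $\lambda \in R$, $F \in R[[t]]$, and $c \in \mathbb{N}$. Then the coefficient of $t^c$ in $(1+\lambda t)^{c} \cdot T_\lambda(F)$ equals the coefficient of $t^c$ in $F$; in particular, it is independent of $\lambda$. (This is the formal content of Lemma 4.1 of the paper: for a Chow class $A$ on a subscheme $Z$ of a pure-dimensional scheme $X$ and a line bundle $\mathscr{L}$ on $Z$, the term of dimension $\dim X - c$ in $c(\mathscr{L})^{c-1} \cap (A \otimes_X \mathscr{L})$ equals the term of dimension $\dim X - c$ in $A$.) -/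
open PowerSeries Finset

/-- The power series `1 + λ t`. -/
noncomputable def oneAdd {R : Type*} [CommRing R] (l : R) : PowerSeries R :=
  1 + PowerSeries.C l * PowerSeries.X

/-- The inverse power series `(1 + λ t)⁻¹`, via `invOfUnit` (constant coefficient `1`). -/
noncomputable def invOneAdd {R : Type*} [CommRing R] (l : R) : PowerSeries R :=
  PowerSeries.invOfUnit (oneAdd l) 1

/-- The tensor operation `T_λ`, defined coefficientwise:
`T_λ(∑ aᵢ tⁱ) = ∑ aᵢ tⁱ (1+λt)^{-(i+1)}`; the coefficient of `t^m` is the finite sum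
`∑_{i=0}^m aᵢ · [t^{m-i}] (1+λt)^{-(i+1)}`. -/
noncomputable def T {R : Type*} [CommRing R] (l : R) (F : PowerSeries R) : PowerSeries R :=
  PowerSeries.mk fun m => ∑ i ∈ Finset.range (m + 1),
    PowerSeries.coeff i F * PowerSeries.coeff (m - i) (invOneAdd l ^ (i + 1))

lemma oneAdd_mul_invOneAdd {R : Type*} [CommRing R] (l : R) :
    oneAdd l * invOneAdd l = 1 := by
  apply PowerSeries.mul_invOfUnit
  simp [oneAdd]

lemma coeff_oneAdd_pow_eq_zero {R : Type*} [CommRing R] (l : R) :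
    ∀ (m n : ℕ), m < n → PowerSeries.coeff n (oneAdd l ^ m) = 0 := by
  intro m
  induction m with
  | zero => intro n hn; rw [pow_zero, PowerSeries.coeff_one, if_neg (by omega)]
  | succ m ih =>
    intro n hn
    have hn1 : 1 ≤ n := by omega
    rw [pow_succ, show oneAdd l ^ m * oneAdd l = oneAdd l ^ m +
      PowerSeries.C l * (PowerSeries.X ^ 1 * oneAdd l ^ m) from by rw [oneAdd]; ring,
      map_add, ih n (by omega), PowerSeries.coeff_C_mul,
      PowerSeries.coeff_X_pow_mul' _ 1 n, if_pos hn1, ih (n - 1) (by omega)]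
    simp

lemma coeff_oneAdd_pow_mul_inv {R : Type*} [CommRing R] (l : R) (n : ℕ) :
    PowerSeries.coeff n (oneAdd l ^ n * invOneAdd l) = if n = 0 then 1 else 0 := by
  cases n with
  | zero =>
    simp only [pow_zero, one_mul, if_pos rfl]
    rw [PowerSeries.coeff_zero_eq_constantCoeff, invOneAdd,
      PowerSeries.constantCoeff_invOfUnit]
    simp
  | succ k =>
    have : oneAdd l ^ (k + 1) * invOneAdd l = oneAdd l ^ k := by
      rw [pow_succ, mul_assoc, oneAdd_mul_invOneAdd, mul_one]
    rw [this, coeff_oneAdd_pow_eq_zero l k (k + 1) (by omega), if_neg (by omega)]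

/-- The coefficient of `t^c` in `(1+λt)^c · T_λ(F)` equals the coefficient of `t^c` in `F`. -/
theorem coeff_critical_degree_invariant {R : Type*} [CommRing R] (l : R) (F : PowerSeries R)
    (c : ℕ) :
    PowerSeries.coeff c (oneAdd l ^ c * T l F) = PowerSeries.coeff c F := by
  set G : PowerSeries R := ∑ i ∈ Finset.range (c + 1),
    PowerSeries.C (PowerSeries.coeff i F) * (PowerSeries.X ^ i * invOneAdd l ^ (i + 1))
    with hG
  -- coefficients of T and G agree up to degree c
  have hTG : ∀ j ≤ c, PowerSeries.coeff j (T l F) = PowerSeries.coeff j G := by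
    intro j hj
    rw [hG, map_sum, T, PowerSeries.coeff_mk]
    rw [← Finset.sum_range_add_sum_Ico _ (Nat.succ_le_succ hj)]
    have h2 : ∑ i ∈ Finset.Ico (j + 1) (c + 1), PowerSeries.coeff j
        (PowerSeries.C (PowerSeries.coeff i F) *
          (PowerSeries.X ^ i * invOneAdd l ^ (i + 1))) = 0 := by
      apply Finset.sum_eq_zero
      intro i hi
      have : ¬ i ≤ j := by simp at hi; omega
      rw [PowerSeries.coeff_C_mul, PowerSeries.coeff_X_pow_mul', if_neg this, mul_zero]
    rw [h2, add_zero]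
    apply Finset.sum_congr rfl
    intro i hi
    have hij : i ≤ j := by simp at hi; omega
    rw [PowerSeries.coeff_C_mul, PowerSeries.coeff_X_pow_mul', if_pos hij]
  -- replace T by G in the product's c-th coefficient
  have hmul : PowerSeries.coeff c (oneAdd l ^ c * T l F)
      = PowerSeries.coeff c (oneAdd l ^ c * G) := by
    rw [PowerSeries.coeff_mul, PowerSeries.coeff_mul]
    apply Finset.sum_congr rfl
    intro p hp
    rw [Finset.HasAntidiagonal.mem_antidiagonal] at hp
    rw [hTG p.2 (by omega)]
  rw [hmul, hG, Finset.mul_sum, map_sum]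
  have hterm : ∀ i ∈ Finset.range (c + 1),
      PowerSeries.coeff c (oneAdd l ^ c *
        (PowerSeries.C (PowerSeries.coeff i F) *
          (PowerSeries.X ^ i * invOneAdd l ^ (i + 1))))
      = if i = c then PowerSeries.coeff c F else 0 := by
    intro i hi
    have hic : i ≤ c := by simp at hi; omega
    have hpow : oneAdd l ^ c * (PowerSeries.C (PowerSeries.coeff i F) *
        (PowerSeries.X ^ i * invOneAdd l ^ (i + 1)))
        = PowerSeries.C (PowerSeries.coeff i F) *
          (PowerSeries.X ^ i * (oneAdd l ^ (c - i) * invOneAdd l)) := by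
      have h1 : oneAdd l ^ c = oneAdd l ^ (c - i) * oneAdd l ^ i := by
        rw [← pow_add]; congr 1; omega
      have h2 : oneAdd l ^ i * invOneAdd l ^ (i + 1)
          = (oneAdd l * invOneAdd l) ^ i * invOneAdd l := by ring
      rw [h1]
      rw [show oneAdd l ^ (c - i) * oneAdd l ^ i *
        (PowerSeries.C (PowerSeries.coeff i F) *
          (PowerSeries.X ^ i * invOneAdd l ^ (i + 1)))
        = PowerSeries.C (PowerSeries.coeff i F) *
          (PowerSeries.X ^ i * (oneAdd l ^ (c - i) *
            (oneAdd l ^ i * invOneAdd l ^ (i + 1)))) by ring]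
      rw [h2, oneAdd_mul_invOneAdd, one_pow, one_mul]
    rw [hpow, PowerSeries.coeff_C_mul, PowerSeries.coeff_X_pow_mul', if_pos hic,
      coeff_oneAdd_pow_mul_inv]
    rcases eq_or_ne i c with h | h
    · simp [h]
    · rw [if_neg (by omega), mul_zero, if_neg h]
  rw [Finset.sum_congr rfl hterm, Finset.sum_ite_eq' (Finset.range (c + 1)) c,
    if_pos (Finset.self_mem_range_succ c)]
end

section
/- Let $R$ be a commutative ring, let $e, f, c \in \mathbb{N}$ with $e + 1 = f + c$, and let $x_1, \dots, x_e, y_1, \dots, y_f, \lambda \in R$. Then in $R[[t]]$ the coefficient of $t^{c}$ in $\prod_{j=1}^e (1+(x_j+\lambda)t) \cdot \prod_{k=1}^f (1+(y_k+\lambda)t)^{-1}$ equals the coefficient of $t^{c}$ in $\prod_{j=1}^e (1+x_j t) \cdot \prod_{k=1}^f (1+y_k t)^{-1}$; that is, the coefficient in the critical degree $c = e - f + 1$ is independent of $\lambda$. (Via the splitting principle, this expresses that for vector bundles $\mathscr{E}$, $\mathscr{F}$ of ranks $e$, $f$, the term of codimension $e-f+1$ in $\frac{c(\mathscr{E})}{c(\mathscr{F})}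 \cap [X]$ does not change if both $\mathscr{E}$ and $\mathscr{F}$ are tensored by a line bundle.) -/
open PowerSeries Finset

section Aux

variable {R : Type*} [CommRing R]

lemma constCoeff_oneAdd (z : R) : PowerSeries.constantCoeff (oneAdd z) = 1 := by
  simp [oneAdd]

lemma oneAdd_mul_inv (z : R) : oneAdd z * invOneAdd z = 1 :=
  PowerSeries.mul_invOfUnit _ 1 (by simp [constCoeff_oneAdd])

lemma constCoeff_invOneAdd (z : R) : PowerSeries.constantCoeff (invOneAdd z) = 1 := by
  rw [invOneAdd, PowerSeries.constantCoeff_invOfUnit]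
  simp

lemma pow_cancel (z : R) (k : ℕ) : oneAdd z ^ k * invOneAdd z ^ k = 1 := by
  rw [← mul_pow, oneAdd_mul_inv, one_pow]

lemma coeff_succ_oneAdd_mul (z : R) (G : PowerSeries R) (n : ℕ) :
    PowerSeries.coeff (n + 1) (oneAdd z * G) =
      PowerSeries.coeff (n + 1) G + z * PowerSeries.coeff n G := by
  have h : oneAdd z * G = G + PowerSeries.C z * (PowerSeries.X * G) := by
    rw [oneAdd]; ring
  rw [h, map_add, PowerSeries.coeff_C_mul, PowerSeries.coeff_succ_X_mul]

lemma coeff_zero_oneAdd_mul (z : R) (G : PowerSeries R) :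
    PowerSeries.coeff 0 (oneAdd z * G) = PowerSeries.coeff 0 G := by
  simp only [PowerSeries.coeff_zero_eq_constantCoeff, map_mul, constCoeff_oneAdd, one_mul]

lemma coeff_oneAdd_pow (z : R) : ∀ d n : ℕ, d < n → PowerSeries.coeff n (oneAdd z ^ d) = 0 := by
  intro d
  induction d with
  | zero =>
    intro n hn
    rw [pow_zero, PowerSeries.coeff_one, if_neg (by omega)]
  | succ d ih =>
    intro n hn
    obtain ⟨m, rfl⟩ : ∃ m, n = m + 1 := ⟨n - 1, by omega⟩
    rw [pow_succ, mul_comm, coeff_succ_oneAdd_mul, ih _ (by omega), ih _ (by omega)]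
    ring

lemma coeff_zero_W (l : R) (a b : ℕ) :
    PowerSeries.coeff 0 (oneAdd l ^ a * invOneAdd l ^ b) = 1 := by
  simp only [PowerSeries.coeff_zero_eq_constantCoeff, map_mul, map_pow, constCoeff_oneAdd,
    constCoeff_invOneAdd, one_pow, one_mul]

lemma shift_eq (l : R) (e k : ℕ) :
    oneAdd l ^ (e + 1) * invOneAdd l ^ (k + 1) = oneAdd l ^ e * invOneAdd l ^ k := by
  calc oneAdd l ^ (e + 1) * invOneAdd l ^ (k + 1)
      = (oneAdd l * invOneAdd l) * (oneAdd l ^ e * invOneAdd l ^ k) := by ring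
    _ = oneAdd l ^ e * invOneAdd l ^ k := by rw [oneAdd_mul_inv, one_mul]

lemma coeff_mul_oneAdd (x : R) (B : PowerSeries R) (i : ℕ) :
    PowerSeries.coeff i (B * oneAdd x) =
      PowerSeries.coeff i B + x * PowerSeries.coeff i (PowerSeries.X * B) := by
  have h : B * oneAdd x = B + PowerSeries.C x * (PowerSeries.X * B) := by
    rw [oneAdd]; ring
  rw [h, map_add, PowerSeries.coeff_C_mul]

/-- The key relation: `A` is obtained from `B` by substituting `t ↦ t/(1+λt)` and
multiplying by `(1+λt)^{e-f}`. -/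
def TwRel (l : R) (e f : ℕ) (A B : PowerSeries R) : Prop :=
  ∀ m, PowerSeries.coeff m A = ∑ i ∈ Finset.range (m + 1),
    PowerSeries.coeff i B *
      PowerSeries.coeff (m - i) (oneAdd l ^ e * invOneAdd l ^ (f + i))

lemma hsplit (l : R) (e k : ℕ) :
    oneAdd l ^ (e + 1) * invOneAdd l ^ k = oneAdd l * (oneAdd l ^ e * invOneAdd l ^ k) := by
  rw [pow_succ]; ring

lemma coreS (l x : R) (e f : ℕ) (B : PowerSeries R) (m : ℕ) :
    (∑ i ∈ Finset.range (m + 1 + 1), PowerSeries.coeff i (B * oneAdd x) *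
        PowerSeries.coeff (m + 1 - i) (oneAdd l ^ (e + 1) * invOneAdd l ^ (f + i)))
      = (∑ i ∈ Finset.range (m + 1 + 1), PowerSeries.coeff i B *
          PowerSeries.coeff (m + 1 - i) (oneAdd l ^ e * invOneAdd l ^ (f + i)))
        + (x + l) * ∑ i ∈ Finset.range (m + 1), PowerSeries.coeff i B *
            PowerSeries.coeff (m - i) (oneAdd l ^ e * invOneAdd l ^ (f + i)) := by
  have hT1 : (∑ i ∈ Finset.range (m + 1 + 1), PowerSeries.coeff i B *
        PowerSeries.coeff (m + 1 - i) (oneAdd l ^ (e + 1) * invOneAdd l ^ (f + i)))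
      = (∑ i ∈ Finset.range (m + 1 + 1), PowerSeries.coeff i B *
          PowerSeries.coeff (m + 1 - i) (oneAdd l ^ e * invOneAdd l ^ (f + i)))
        + l * ∑ i ∈ Finset.range (m + 1), PowerSeries.coeff i B *
            PowerSeries.coeff (m - i) (oneAdd l ^ e * invOneAdd l ^ (f + i)) := by
    rw [Finset.sum_range_succ, Finset.sum_range_succ (n := m + 1)
      (f := fun i => PowerSeries.coeff i B *
        PowerSeries.coeff (m + 1 - i) (oneAdd l ^ e * invOneAdd l ^ (f + i)))]
    have key : ∀ i ∈ Finset.range (m + 1),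
        PowerSeries.coeff i B *
          PowerSeries.coeff (m + 1 - i) (oneAdd l ^ (e + 1) * invOneAdd l ^ (f + i))
        = (PowerSeries.coeff i B *
            PowerSeries.coeff (m + 1 - i) (oneAdd l ^ e * invOneAdd l ^ (f + i))
          + l * (PowerSeries.coeff i B *
            PowerSeries.coeff (m - i) (oneAdd l ^ e * invOneAdd l ^ (f + i)))) := by
      intro i hi
      have hi' : i ≤ m := by simpa [Nat.lt_succ_iff] using hi
      have h1 : m + 1 - i = (m - i) + 1 := by omega
      rw [h1, hsplit, coeff_succ_oneAdd_mul]
      ring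
    rw [Finset.sum_congr rfl key, Finset.sum_add_distrib, ← Finset.mul_sum]
    have hlast : PowerSeries.coeff (m + 1) B *
        PowerSeries.coeff (m + 1 - (m + 1)) (oneAdd l ^ (e + 1) * invOneAdd l ^ (f + (m + 1)))
        = PowerSeries.coeff (m + 1) B *
          PowerSeries.coeff (m + 1 - (m + 1)) (oneAdd l ^ e * invOneAdd l ^ (f + (m + 1))) := by
      rw [Nat.sub_self, hsplit, coeff_zero_oneAdd_mul]
    rw [hlast]
    ring
  have hT2 : (∑ i ∈ Finset.range (m + 1 + 1), PowerSeries.coeff i (PowerSeries.X * B) *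
        PowerSeries.coeff (m + 1 - i) (oneAdd l ^ (e + 1) * invOneAdd l ^ (f + i)))
      = ∑ i ∈ Finset.range (m + 1), PowerSeries.coeff i B *
          PowerSeries.coeff (m - i) (oneAdd l ^ e * invOneAdd l ^ (f + i)) := by
    rw [Finset.sum_range_succ']
    have h0 : PowerSeries.coeff 0 (PowerSeries.X * B) = 0 := by
      simp [PowerSeries.coeff_zero_eq_constantCoeff]
    rw [h0, zero_mul, add_zero]
    apply Finset.sum_congr rfl
    intro i _
    rw [PowerSeries.coeff_succ_X_mul,
      show m + 1 - (i + 1) = m - i from by omega,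
      show f + (i + 1) = (f + i) + 1 from rfl, shift_eq]
  calc (∑ i ∈ Finset.range (m + 1 + 1), PowerSeries.coeff i (B * oneAdd x) *
        PowerSeries.coeff (m + 1 - i) (oneAdd l ^ (e + 1) * invOneAdd l ^ (f + i)))
      = (∑ i ∈ Finset.range (m + 1 + 1), PowerSeries.coeff i B *
          PowerSeries.coeff (m + 1 - i) (oneAdd l ^ (e + 1) * invOneAdd l ^ (f + i)))
        + x * ∑ i ∈ Finset.range (m + 1 + 1), PowerSeries.coeff i (PowerSeries.X * B) *
          PowerSeries.coeff (m + 1 - i) (oneAdd l ^ (e + 1) * invOneAdd l ^ (f + i)) := by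
        rw [Finset.mul_sum, ← Finset.sum_add_distrib]
        apply Finset.sum_congr rfl
        intro i _
        rw [coeff_mul_oneAdd]
        ring
    _ = _ := by rw [hT1, hT2]; ring

lemma rel_num (l x : R) {e f : ℕ} {A B : PowerSeries R} (hR : TwRel l e f A B) :
    TwRel l (e + 1) f (A * oneAdd (x + l)) (B * oneAdd x) := by
  intro m
  match m with
  | 0 =>
    simp only [zero_add, Finset.sum_range_one, Nat.sub_self, coeff_zero_W, mul_one]
    have h0 := hR 0
    simp only [zero_add, Finset.sum_range_one, Nat.sub_self, coeff_zero_W, mul_one] at h0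
    rw [mul_comm, coeff_zero_oneAdd_mul, mul_comm, coeff_zero_oneAdd_mul, h0]
  | Nat.succ m =>
    have h1 : PowerSeries.coeff (m + 1) (A * oneAdd (x + l)) =
        PowerSeries.coeff (m + 1) A + (x + l) * PowerSeries.coeff m A := by
      rw [mul_comm, coeff_succ_oneAdd_mul]
    rw [h1, coreS, hR (m + 1), hR m]

lemma rel_num_cancel (l x : R) {e f : ℕ} {A B : PowerSeries R}
    (hR : TwRel l (e + 1) f (A * oneAdd (x + l)) (B * oneAdd x)) : TwRel l e f A B := by
  intro m
  induction m with
  | zero =>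
    have h0 := hR 0
    simp only [zero_add, Finset.sum_range_one, Nat.sub_self, coeff_zero_W, mul_one] at h0 ⊢
    rw [mul_comm, coeff_zero_oneAdd_mul, mul_comm, coeff_zero_oneAdd_mul] at h0
    exact h0
  | succ m ih =>
    have h1 := hR (m + 1)
    rw [mul_comm A, coeff_succ_oneAdd_mul, coreS l x e f B m, ih] at h1
    exact add_right_cancel h1

lemma rel_shift (l : R) {e f : ℕ} {A B : PowerSeries R} (hR : TwRel l e f A B) :
    TwRel l (e + 1) (f + 1) A B := by
  intro m
  rw [hR m]
  apply Finset.sum_congr rfl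
  intro i _
  rw [show f + 1 + i = (f + i) + 1 from by omega, shift_eq]

lemma rel_den (l y : R) {e f : ℕ} {A B : PowerSeries R} (hR : TwRel l e f A B) :
    TwRel l e (f + 1) (A * invOneAdd (y + l)) (B * invOneAdd y) := by
  have hA : A * invOneAdd (y + l) * oneAdd (y + l) = A := by
    rw [mul_assoc, mul_comm (invOneAdd (y + l)), oneAdd_mul_inv, mul_one]
  have hB : B * invOneAdd y * oneAdd y = B := by
    rw [mul_assoc, mul_comm (invOneAdd y), oneAdd_mul_inv, mul_one]
  apply rel_num_cancel l y
  rw [hA, hB]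
  exact rel_shift l hR

lemma rel_one (l : R) : TwRel l 0 0 1 1 := by
  intro m
  rw [Finset.sum_eq_single_of_mem 0 (Finset.mem_range.mpr (by omega))]
  · simp
  · intro i _ hi
    rw [PowerSeries.coeff_one, if_neg hi, zero_mul]

lemma rel_prod_num (l : R) {e0 f0 : ℕ} {A B : PowerSeries R} (hR : TwRel l e0 f0 A B) :
    ∀ (e : ℕ) (x : Fin e → R),
      TwRel l (e0 + e) f0 (A * ∏ j, oneAdd (x j + l)) (B * ∏ j, oneAdd (x j)) := by
  intro e
  induction e with
  | zero =>
    intro x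
    simpa using hR
  | succ e ih =>
    intro x
    have h1 := rel_num l (x 0) (ih fun i => x i.succ)
    have e1 : A * ∏ j, oneAdd (x j + l) =
        A * (∏ i : Fin e, oneAdd (x i.succ + l)) * oneAdd (x 0 + l) := by
      rw [Fin.prod_univ_succ]; ring
    have e2 : B * ∏ j, oneAdd (x j) =
        B * (∏ i : Fin e, oneAdd (x i.succ)) * oneAdd (x 0) := by
      rw [Fin.prod_univ_succ]; ring
    rw [e1, e2]
    exact h1

lemma rel_prod_den (l : R) {e0 f0 : ℕ} {A B : PowerSeries R} (hR : TwRel l e0 f0 A B) :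
    ∀ (f : ℕ) (y : Fin f → R),
      TwRel l e0 (f0 + f) (A * ∏ k, invOneAdd (y k + l)) (B * ∏ k, invOneAdd (y k)) := by
  intro f
  induction f with
  | zero =>
    intro y
    simpa using hR
  | succ f ih =>
    intro y
    have h1 := rel_den l (y 0) (ih fun i => y i.succ)
    have e1 : A * ∏ k, invOneAdd (y k + l) =
        A * (∏ i : Fin f, invOneAdd (y i.succ + l)) * invOneAdd (y 0 + l) := by
      rw [Fin.prod_univ_succ]; ring
    have e2 : B * ∏ k, invOneAdd (y k) =
        B * (∏ i : Fin f, invOneAdd (y i.succ)) * invOneAdd (y 0) := by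
      rw [Fin.prod_univ_succ]; ring
    rw [e1, e2]
    exact h1

end Aux

/-- The coefficient in the critical degree `c = e - f + 1` of
`∏ (1+(xⱼ+λ)t) · ∏ (1+(y_k+λ)t)⁻¹` is independent of `λ`. -/
theorem critical_coeff_twist_invariant {R : Type*} [CommRing R] (e f c : ℕ)
    (h : e + 1 = f + c) (x : Fin e → R) (y : Fin f → R) (l : R) :
    PowerSeries.coeff c
        ((∏ j, oneAdd (x j + l)) * ∏ k, invOneAdd (y k + l)) =
      PowerSeries.coeff c
        ((∏ j, oneAdd (x j)) * ∏ k, invOneAdd (y k)) := by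
  have r1 := rel_prod_num l (rel_one l) e x
  have r2 := rel_prod_den l r1 f y
  simp only [Nat.zero_add, one_mul] at r2
  rw [r2 c]
  rw [Finset.sum_eq_single_of_mem c (Finset.mem_range.mpr (by omega))]
  · have hfc : f + c = e + 1 := by omega
    have hW : oneAdd l ^ e * invOneAdd l ^ (f + c) = invOneAdd l := by
      rw [hfc, pow_succ, ← mul_assoc, pow_cancel, one_mul]
    rw [Nat.sub_self, hW, PowerSeries.coeff_zero_eq_constantCoeff, constCoeff_invOneAdd, mul_one]
  · intro i hi hne
    have hi' : i < c := by
      rw [Finset.mem_range] at hi; omega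
    have hfi : e = (e - (f + i)) + (f + i) := by omega
    have hW : oneAdd l ^ e * invOneAdd l ^ (f + i) = oneAdd l ^ (e - (f + i)) := by
      conv_lhs => rw [hfi]
      rw [pow_add, mul_assoc, pow_cancel, mul_one]
    rw [hW, coeff_oneAdd_pow _ _ _ (by omega), mul_zero]
end

section
/- Let $R$ be a commutative ring, $\lambda \in R$, $r \in \mathbb{N}$, and $x_1, \dots, x_r \in R$. Then $T_\lambda\Big( t^r \prod_{j=1}^r (1+x_j t)^{-1} \Big) = t^r \,(1+\lambda t)^{-1} \prod_{j=1}^r (1+(x_j+\lambda)t)^{-1}$. (This is the formal content of property (i) of tensored Segre classes: for a regular embedding $Z \subseteq Y$ of codimension $r$ with normal bundle $N_Z Y$ having Chern roots $x_1, \dots, x_r$, one has $s(Z,Y) = c(N_ZY)^{-1} \cap [Z]$ and $s(Z,Y)^{\mathscr{L}} = (c(\mathscr{L})\, c(N_Z Y \otimes \mathscr{L}))^{-1} \cap [Z]$.) -/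
open PowerSeries Finset

namespace TensorAux

variable {R : Type*} [CommRing R]

lemma oneAdd_mul_invOneAdd (a : R) : oneAdd a * invOneAdd a = 1 := by
  apply PowerSeries.mul_invOfUnit
  simp [oneAdd]

lemma invOneAdd_mul_oneAdd (a : R) : invOneAdd a * oneAdd a = 1 := by
  rw [mul_comm]; exact oneAdd_mul_invOneAdd a

/-- The substitution series `s = t (1+λt)⁻¹`. -/
noncomputable def s (l : R) : PowerSeries R := X * invOneAdd l

lemma coeff_s_pow_of_lt (l : R) {n i : ℕ} (h : n < i) :
    coeff n (s l ^ i) = 0 := by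
  rw [s, mul_pow, mul_comm, coeff_mul_X_pow', if_neg (by omega)]

/-- The `n`-th partial substitution `∑_{i ≤ n} aᵢ sⁱ`. -/
noncomputable def Q (l : R) (n : ℕ) (F : PowerSeries R) : PowerSeries R :=
  ∑ i ∈ range (n + 1), C (coeff i F) * s l ^ i

lemma Q_eq (l : R) (n : ℕ) (F : PowerSeries R) :
    Q l n F = (trunc (n + 1) F).eval₂ (C) (s l) :=
  (eval₂_trunc_eq_sum_range (s l) (C) (n + 1) F).symm

/-- The substitution `F(t) ↦ F(t(1+λt)⁻¹)`, defined coefficientwise. -/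
noncomputable def U (l : R) (F : PowerSeries R) : PowerSeries R :=
  mk fun n => coeff n (Q l n F)

lemma coeff_Q_stable (l : R) (F : PowerSeries R) {n m : ℕ} (h : n ≤ m) :
    coeff n (Q l m F) = coeff n (Q l n F) := by
  rw [Q, Q, map_sum, map_sum]
  symm
  apply Finset.sum_subset
  · intro i hi
    simp only [mem_range] at *
    omega
  · intro i hi hni
    simp only [mem_range] at hi hni
    rw [coeff_C_mul, coeff_s_pow_of_lt l (by omega), mul_zero]

lemma coeff_U (l : R) (F : PowerSeries R) {n m : ℕ} (h : n ≤ m) :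
    coeff n (U l F) = coeff n (Q l m F) := by
  rw [U, coeff_mk, coeff_Q_stable l F h]

lemma U_one (l : R) : U l (1 : PowerSeries R) = 1 := by
  ext n
  rw [U, coeff_mk, Q_eq, trunc_one, Polynomial.eval₂_one]

lemma U_mul (l : R) (F G : PowerSeries R) : U l (F * G) = U l F * U l G := by
  ext n
  set P := trunc (n + 1) F with hP
  set Qq := trunc (n + 1) G with hQq
  have hdeg : (P * Qq).natDegree < 2 * n + 2 := by
    have h1 : P.natDegree < n + 1 := natDegree_trunc_lt F n
    have h2 : Qq.natDegree < n + 1 := natDegree_trunc_lt G n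
    calc (P * Qq).natDegree ≤ P.natDegree + Qq.natDegree := Polynomial.natDegree_mul_le
      _ < 2 * n + 2 := by omega
  have key : coeff n (U l (F * G)) = coeff n ((P * Qq).eval₂ (C) (s l)) := by
    rw [U, coeff_mk, Q_eq]
    rw [← trunc_trunc_mul_trunc, ← hP, ← hQq, ← Polynomial.coe_mul]
    rw [← Q_eq]
    rw [coeff_Q_stable l _ (show n ≤ 2 * n + 1 by omega) |>.symm]
    rw [Q_eq, trunc_coe_eq_self hdeg]
  rw [key, Polynomial.eval₂_mul, coeff_mul, coeff_mul]
  apply Finset.sum_congr rfl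
  rintro ⟨a, b⟩ hab
  rw [HasAntidiagonal.mem_antidiagonal] at hab
  rw [coeff_U l F (show a ≤ n by omega), coeff_U l G (show b ≤ n by omega),
    Q_eq, Q_eq]

lemma U_C (l a : R) : U l (C a) = C a := by
  ext n
  rw [U, coeff_mk, Q_eq, trunc_C, Polynomial.eval₂_C]

lemma U_X (l : R) : U l (X : PowerSeries R) = s l := by
  ext n
  rw [U, coeff_mk, Q]
  rcases n with _ | n
  · simp [coeff_X, s, PowerSeries.coeff_zero_eq_constantCoeff]
  · have : ∑ i ∈ range (n + 1 + 1), C (coeff i (X : PowerSeries R)) * s l ^ i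
        = s l := by
      rw [Finset.sum_eq_single 1]
      · simp
      · intro i _ hi
        rw [coeff_X, if_neg hi]; simp
      · intro h
        exact absurd (mem_range.mpr (by omega)) h
    rw [this]

lemma U_add (l : R) (F G : PowerSeries R) : U l (F + G) = U l F + U l G := by
  ext n
  simp only [U, coeff_mk, Q, map_add, add_mul, Finset.sum_add_distrib]

lemma U_oneAdd (l a : R) : U l (oneAdd a) = 1 + C a * s l := by
  rw [oneAdd, U_add, U_one, U_mul, U_C, U_X]

lemma U_invOneAdd (l a : R) :
    U l (invOneAdd a) = oneAdd l * invOneAdd (a + l) := by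
  have h1 : U l (oneAdd a) * U l (invOneAdd a) = 1 := by
    rw [← U_mul, oneAdd_mul_invOneAdd, U_one]
  have h2 : U l (oneAdd a) * (oneAdd l * invOneAdd (a + l)) = 1 := by
    rw [U_oneAdd]
    have e1 : (1 + C a * s l) * (oneAdd l * invOneAdd (a + l)) =
        (oneAdd l + C a * X * (invOneAdd l * oneAdd l)) * invOneAdd (a + l) := by
      rw [s]; ring
    rw [e1, invOneAdd_mul_oneAdd, mul_one]
    have e2 : oneAdd l + C a * X = oneAdd (a + l) := by
      rw [oneAdd, oneAdd, map_add]; ring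
    rw [e2, oneAdd_mul_invOneAdd]
  calc U l (invOneAdd a)
      = U l (invOneAdd a) * (U l (oneAdd a) * (oneAdd l * invOneAdd (a + l))) := by
        rw [h2, mul_one]
    _ = (U l (oneAdd a) * U l (invOneAdd a)) * (oneAdd l * invOneAdd (a + l)) := by
        ring
    _ = oneAdd l * invOneAdd (a + l) := by rw [h1, one_mul]

/-- `U` as a monoid homomorphism. -/
noncomputable def Uhom (l : R) : PowerSeries R →* PowerSeries R where
  toFun := U l
  map_one' := U_one l
  map_mul' := U_mul l

lemma T_eq (l : R) (F : PowerSeries R) : T l F = invOneAdd l * U l F := by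
  ext n
  have step1 : coeff n (invOneAdd l * U l F) = coeff n (invOneAdd l * Q l n F) := by
    rw [coeff_mul, coeff_mul]
    apply Finset.sum_congr rfl
    rintro ⟨a, b⟩ hab
    rw [HasAntidiagonal.mem_antidiagonal] at hab
    rw [coeff_U l F (show b ≤ n by omega)]
  rw [step1, T, coeff_mk, Q, Finset.mul_sum, map_sum]
  apply Finset.sum_congr rfl
  intro i hi
  rw [mem_range] at hi
  have e : invOneAdd l * (C (coeff i F) * s l ^ i)
      = C (coeff i F) * (X ^ i * invOneAdd l ^ (i + 1)) := by
    rw [s, mul_pow]; ring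
  rw [e, coeff_C_mul, coeff_X_pow_mul', if_pos (by omega)]

end TensorAux

open TensorAux in
/-- `T_λ(t^r ∏(1+xⱼt)⁻¹) = t^r (1+λt)⁻¹ ∏(1+(xⱼ+λ)t)⁻¹` (tensored Segre class of a
regular embedding). -/
theorem tensor_segre_regular_embedding {R : Type*} [CommRing R] (l : R) (r : ℕ)
    (x : Fin r → R) :
    T l (PowerSeries.X ^ r * ∏ j, invOneAdd (x j)) =
      PowerSeries.X ^ r * invOneAdd l * ∏ j, invOneAdd (x j + l) := by
  rw [T_eq]
  have hU : U l (PowerSeries.X ^ r * ∏ j, invOneAdd (x j))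
      = s l ^ r * ∏ j, (oneAdd l * invOneAdd (x j + l)) := by
    have : U l (PowerSeries.X ^ r * ∏ j, invOneAdd (x j))
        = Uhom l (PowerSeries.X ^ r * ∏ j, invOneAdd (x j)) := rfl
    rw [this, map_mul, map_pow, map_prod]
    have hX : Uhom l (PowerSeries.X : PowerSeries R) = s l := U_X l
    rw [hX]
    congr 1
    apply Finset.prod_congr rfl
    intro j _
    exact U_invOneAdd l (x j)
  rw [hU, Finset.prod_mul_distrib, Finset.prod_const, card_univ, Fintype.card_fin]
  have hs : s l ^ r * oneAdd l ^ r = PowerSeries.X ^ r := by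
    rw [s, mul_pow, mul_assoc, ← mul_pow, invOneAdd_mul_oneAdd, one_pow, mul_one]
  calc invOneAdd l * (s l ^ r * (oneAdd l ^ r * ∏ j, invOneAdd (x j + l)))
      = (s l ^ r * oneAdd l ^ r) * invOneAdd l * ∏ j, invOneAdd (x j + l) := by ring
    _ = PowerSeries.X ^ r * invOneAdd l * ∏ j, invOneAdd (x j + l) := by rw [hs]
end

section
/- Let $R$ be a commutative ring, $x \in R$, and $r \ge 1$ a natural number. Then $T_{-x}\big( t^r \,(1+x t)^{-r} \big) = t^r \,(1-x t)^{-1}$; in particular the result is independent of $r$. (This is the formal content of the paper's complete-intersection example: if $Z$ is the complete intersection of $r$ linearly equivalent effective Cartier divisors of class $D$ in $Y$, then $s(Z,Y)^{\mathscr{O}(-D)} = (1 + D + D^2 + \cdots) \cap [Z]$, independently of $r$; for $r = 1$ this gives $s(D,Y)^{\mathscr{O}(-D)} = D + D^2 + D^3 + \cdots$.) -/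
open PowerSeries Finset

lemma invOneAdd_eq {R : Type*} [CommRing R] (l : R) :
    invOneAdd l = PowerSeries.mk fun n => (-l) ^ n := by
  have h : oneAdd l * PowerSeries.mk (fun n => (-l) ^ n) = 1 := by
    ext m
    rw [oneAdd, add_mul, one_mul, map_add]
    cases m with
    | zero => simp
    | succ n =>
      rw [mul_assoc, PowerSeries.coeff_C_mul, PowerSeries.coeff_succ_X_mul,
        PowerSeries.coeff_mk, PowerSeries.coeff_mk, PowerSeries.coeff_one,
        if_neg (Nat.succ_ne_zero n), pow_succ]
      ring
  calc invOneAdd l = invOneAdd l * (oneAdd l * PowerSeries.mk (fun n => (-l) ^ n)) := by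
        rw [h, mul_one]
    _ = (oneAdd l * invOneAdd l) * PowerSeries.mk (fun n => (-l) ^ n) := by ring
    _ = _ := by rw [oneAdd_mul_invOneAdd, one_mul]

lemma coeff_invOneAdd {R : Type*} [CommRing R] (l : R) (n : ℕ) :
    PowerSeries.coeff n (invOneAdd l) = (-l) ^ n := by
  rw [invOneAdd_eq, PowerSeries.coeff_mk]

lemma coeff_oneAdd_pow_s7 {R : Type*} [CommRing R] (x : R) (N n : ℕ) :
    PowerSeries.coeff n (oneAdd x ^ N) = (N.choose n : R) * x ^ n := by
  have : oneAdd x ^ N = ∑ k ∈ Finset.range (N + 1),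
      PowerSeries.C ((N.choose k : R) * x ^ k) * PowerSeries.X ^ k := by
    rw [oneAdd, add_comm (1 : PowerSeries R), add_pow]
    refine Finset.sum_congr rfl fun k _ => ?_
    rw [one_pow, mul_one, mul_pow, ← map_pow, ← map_natCast (PowerSeries.C (R := R)) (N.choose k),
      map_mul]
    ring
  rw [this, map_sum]
  have h1 : ∀ k ∈ Finset.range (N + 1),
      PowerSeries.coeff n (PowerSeries.C ((N.choose k : R) * x ^ k) * PowerSeries.X ^ k)
        = if n = k then (N.choose k : R) * x ^ k else 0 := by
    intro k _
    rw [PowerSeries.coeff_C_mul, PowerSeries.coeff_X_pow]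
    split_ifs <;> simp
  rw [Finset.sum_congr rfl h1, Finset.sum_ite_eq (Finset.range (N + 1)) n
    (fun k => (N.choose k : R) * x ^ k)]
  split_ifs with h
  · rfl
  · rw [Finset.mem_range, not_lt] at h
    rw [Nat.choose_eq_zero_of_lt (by omega)]
    simp

lemma hockey_stick (k n : ℕ) :
    ∑ p ∈ Finset.range (n + 1), (p + k).choose k = (n + k + 1).choose (k + 1) := by
  induction n with
  | zero => simp
  | succ n ih =>
    rw [Finset.sum_range_succ, ih]
    have h4 : n + 1 + k + 1 = (n + k + 1) + 1 := by omega
    have h5 : n + 1 + k = n + k + 1 := by omega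
    rw [h4, h5, Nat.choose_succ_succ (n + k + 1) k]
    simp only [Nat.succ_eq_add_one]
    omega

lemma coeff_invOneAdd_pow {R : Type*} [CommRing R] (l : R) (k n : ℕ) :
    PowerSeries.coeff n (invOneAdd l ^ (k + 1)) = ((n + k).choose n : R) * (-l) ^ n := by
  induction k generalizing n with
  | zero => simp [coeff_invOneAdd]
  | succ k ih =>
    rw [pow_succ, PowerSeries.coeff_mul,
      Finset.Nat.sum_antidiagonal_eq_sum_range_succ_mk]
    have h1 : ∀ p ∈ Finset.range (n + 1),
        PowerSeries.coeff p (invOneAdd l ^ (k + 1)) *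
          PowerSeries.coeff (n - p) (invOneAdd l)
          = ((p + k).choose p : R) * (-l) ^ n := by
      intro p hp
      rw [Finset.mem_range] at hp
      rw [ih, coeff_invOneAdd, mul_assoc, ← pow_add]
      congr 2
      omega
    rw [Finset.sum_congr rfl h1, ← Finset.sum_mul, ← Nat.cast_sum]
    have h2 : ∑ p ∈ Finset.range (n + 1), (p + k).choose p
        = (n + (k + 1)).choose n := by
      have h3 : ∀ p ∈ Finset.range (n + 1), (p + k).choose p = (p + k).choose k :=
        fun p _ => Nat.choose_symm_add
      rw [Finset.sum_congr rfl h3, hockey_stick,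
        show n + (k + 1) = (k + 1) + n from by omega, ← Nat.choose_symm_add,
        show (k + 1) + n = n + k + 1 from by omega]
    rw [h2]

lemma coeff_T_neg {R : Type*} [CommRing R] (x : R) (F : PowerSeries R) (m : ℕ) :
    PowerSeries.coeff m (T (-x) F) = PowerSeries.coeff m (F * oneAdd x ^ m) := by
  rw [T, PowerSeries.coeff_mk, PowerSeries.coeff_mul,
    Finset.Nat.sum_antidiagonal_eq_sum_range_succ_mk]
  refine Finset.sum_congr rfl fun i hi => ?_
  rw [Finset.mem_range] at hi
  congr 1
  rw [coeff_invOneAdd_pow, coeff_oneAdd_pow_s7, neg_neg,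
    show m - i + i = m from by omega]

/-- `T_{-x}(t^r (1+xt)^{-r}) = t^r (1-xt)⁻¹`, independently of `r ≥ 1` (complete
intersection example). -/
theorem tensor_segre_complete_intersection {R : Type*} [CommRing R] (x : R) (r : ℕ)
    (hr : 1 ≤ r) :
    T (-x) (PowerSeries.X ^ r * invOneAdd x ^ r) =
      PowerSeries.X ^ r * invOneAdd (-x) := by
  ext m
  rw [coeff_T_neg]
  rcases le_or_gt r m with h | h
  · obtain ⟨d, rfl⟩ : ∃ d, m = r + d := ⟨m - r, by omega⟩
    have hG : invOneAdd x ^ r * oneAdd x ^ (r + d) = oneAdd x ^ d := by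
      rw [pow_add, ← mul_assoc, ← mul_pow, mul_comm (invOneAdd x) (oneAdd x),
        oneAdd_mul_invOneAdd, one_pow, one_mul]
    rw [mul_assoc, hG]
    have h1 : r + d = d + r := by omega
    rw [h1, PowerSeries.coeff_X_pow_mul, PowerSeries.coeff_X_pow_mul,
      coeff_oneAdd_pow_s7, coeff_invOneAdd, neg_neg, Nat.choose_self]
    simp
  · rw [mul_assoc, PowerSeries.coeff_X_pow_mul', PowerSeries.coeff_X_pow_mul',
      if_neg (by omega), if_neg (by omega)]
end
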